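/- Let ζ₁, ζ₂ be complex with positive imaginary parts, ζ₁ ≠ ζ₂, and let u₁, u₂ ∈ ℂ^m be unit vectors. Define e^{-2φ₁₂} = |（ζ₁-ζ₂)/(ζ₁-ζ₂*)|²·(1 + ((ζ₁-ζ₁*)(ζ₂-ζ₂*)/|ζ₁-ζ₂*|²)|⟨u₂,u₁⟩|²) and u_{{1},2} = e^{φ₁₂}·((ζ₁*-ζ₂*)/(ζ₁-ζ₂*))·(u₂ - ((ζ₁-ζ₁*)/(ζ₁-ζ₂*))·⟨u₂,u₁⟩·u₁). Then ‖u_{{1},2}‖ = 1. -/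

import Mathlib

open Complex Matrix BigOperators

noncomputable section

/-- Hermitian inner product on ℂ^m, linear in the first slot. -/
def herm {m : ℕ} (u v : Fin m → ℂ) : ℂ := ∑ a, u a * (starRingEnd ℂ) (v a)

lemma herm_conj' {m : ℕ} (u v : Fin m → ℂ) :
    herm u v = (starRingEnd ℂ) (herm v u) := by
  simp [herm, map_sum, _root_.map_mul, mul_comm]

lemma herm_expand' {m : ℕ} (c α : ℂ) (u v : Fin m → ℂ) :
    herm (fun a => c * (u a - α * v a)) (fun a => c * (u a - α * v a)) =
      c * (starRingEnd ℂ) c * (herm u u - (starRingEnd ℂ) α * herm u v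
        - α * herm v u + α * (starRingEnd ℂ) α * herm v v) := by
  have h : ∀ a : Fin m, (c * (u a - α * v a)) * (starRingEnd ℂ) (c * (u a - α * v a)) =
      c * (starRingEnd ℂ) c * (u a * (starRingEnd ℂ) (u a))
      - c * (starRingEnd ℂ) c * (starRingEnd ℂ) α * (u a * (starRingEnd ℂ) (v a))
      - c * (starRingEnd ℂ) c * α * (v a * (starRingEnd ℂ) (u a))
      + c * (starRingEnd ℂ) c * α * (starRingEnd ℂ) α * (v a * (starRingEnd ℂ) (v a)) := by
    intro a
    simp only [_root_.map_mul, map_sub]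
    ring
  simp only [herm]
  rw [Finset.sum_congr rfl fun a _ => h a]
  simp only [Finset.sum_add_distrib, Finset.sum_sub_distrib, ← Finset.mul_sum]
  ring

lemma herm_inner' {m : ℕ} (u v : Fin m → ℂ) :
    herm u v = inner (𝕜 := ℂ) ((WithLp.equiv 2 (Fin m → ℂ)).symm v)
      ((WithLp.equiv 2 (Fin m → ℂ)).symm u) := by
  simp [herm, PiLp.inner_apply, mul_comm]

lemma norm_one_of_herm' {m : ℕ} (u : Fin m → ℂ) (hu : herm u u = 1) :
    ‖(WithLp.equiv 2 (Fin m → ℂ)).symm u‖ = 1 := by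
  set U := (WithLp.equiv 2 (Fin m → ℂ)).symm u
  have h2 : (1 : ℂ) = ((‖U‖ : ℝ) : ℂ)^2 := by
    have h := inner_self_eq_norm_sq_to_K (𝕜 := ℂ) U
    rw [← herm_inner', hu] at h
    exact h
  have h3 : (‖U‖ : ℝ)^2 = 1 := by exact_mod_cast h2.symm
  nlinarith [norm_nonneg U]

lemma herm_cs' {m : ℕ} (u v : Fin m → ℂ) (hu : herm u u = 1) (hv : herm v v = 1) :
    ‖herm u v‖ ≤ 1 := by
  have := norm_inner_le_norm (𝕜 := ℂ) ((WithLp.equiv 2 (Fin m → ℂ)).symm v)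
    ((WithLp.equiv 2 (Fin m → ℂ)).symm u)
  rw [norm_one_of_herm' u hu, norm_one_of_herm' v hv] at this
  rw [herm_inner']
  simpa using this

set_option maxHeartbeats 1000000 in
lemma helper' (r s cs t A A' B B' : ℂ) (hd : A - B' ≠ 0) (hdc : A' - B ≠ 0)
    (hst : s * cs = t)
    (hbig : r * r * ((A-B)*(A'-B')*((A-B')*(A'-B) + (A-A')*(B-B')*t)) = ((A-B')*(A'-B))^2) :
    r * ((A'-B')/(A-B')) * (r * ((A-B)/(A'-B))) *
      (1 - (A'-A)/(A'-B) * cs * s - (A-A')/(A-B') * s * cs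
        + (A-A')/(A-B') * s * ((A'-A)/(A'-B) * cs)) = 1 := by
  subst hst
  have hH2 : r * ((A'-B')/(A-B')) * (r * ((A-B)/(A'-B))) *
      (1 - (A'-A)/(A'-B) * cs * s - (A-A')/(A-B') * s * cs
        + (A-A')/(A-B') * s * ((A'-A)/(A'-B) * cs))
      = r * r * ((A-B)*(A'-B')*((A-B')*(A'-B) + (A-A')*(B-B')*(s*cs)))
        / ((A-B')^2 * (A'-B)^2) := by
    field_simp
    ring
  rw [hH2, hbig, mul_pow,
    div_self (by exact mul_ne_zero (pow_ne_zero 2 hd) (pow_ne_zero 2 hdc))]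

set_option maxHeartbeats 1000000 in
theorem stmt10 {m : ℕ} (ζ₁ ζ₂ : ℂ) (h1 : 0 < ζ₁.im) (h2 : 0 < ζ₂.im) (hne : ζ₁ ≠ ζ₂)
    (u₁ u₂ : Fin m → ℂ) (hu1 : herm u₁ u₁ = 1) (hu2 : herm u₂ u₂ = 1) :
    -- e^{-2φ₁₂}; note (ζ₁-ζ₁*)(ζ₂-ζ₂*) is real, so we take its real part
    let eneg : ℝ := (‖(ζ₁ - ζ₂) / (ζ₁ - (starRingEnd ℂ) ζ₂)‖)^2 *
      (1 + ((ζ₁ - (starRingEnd ℂ) ζ₁) * (ζ₂ - (starRingEnd ℂ) ζ₂)).re /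
        (‖ζ₁ - (starRingEnd ℂ) ζ₂‖)^2 * (‖herm u₂ u₁‖)^2)
    let u12 : Fin m → ℂ := fun a =>
      (((Real.sqrt eneg)⁻¹ : ℝ) : ℂ) *
        (((starRingEnd ℂ) ζ₁ - (starRingEnd ℂ) ζ₂) / (ζ₁ - (starRingEnd ℂ) ζ₂)) *
        (u₂ a - (ζ₁ - (starRingEnd ℂ) ζ₁) / (ζ₁ - (starRingEnd ℂ) ζ₂) *
          herm u₂ u₁ * u₁ a)
    herm u12 u12 = 1 := by
  intro eneg u12
  have hu12 : u12 = fun a =>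
      ((((Real.sqrt eneg)⁻¹ : ℝ) : ℂ) *
        (((starRingEnd ℂ) ζ₁ - (starRingEnd ℂ) ζ₂) / (ζ₁ - (starRingEnd ℂ) ζ₂))) *
        (u₂ a - ((ζ₁ - (starRingEnd ℂ) ζ₁) / (ζ₁ - (starRingEnd ℂ) ζ₂) *
          herm u₂ u₁) * u₁ a) := by
    funext a; show _ * _ = _; ring
  rw [hu12, herm_expand', hu1, hu2, herm_conj' u₁ u₂]
  set s := herm u₂ u₁ with hs
  have hEdef : eneg = ‖(ζ₁ - ζ₂) / (ζ₁ - (starRingEnd ℂ) ζ₂)‖ ^ 2 *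
      (1 + ((ζ₁ - (starRingEnd ℂ) ζ₁) * (ζ₂ - (starRingEnd ℂ) ζ₂)).re /
        ‖ζ₁ - (starRingEnd ℂ) ζ₂‖ ^ 2 * ‖s‖ ^ 2) := rfl
  have hd : ζ₁ - (starRingEnd ℂ) ζ₂ ≠ 0 := by
    intro h
    have := congrArg Complex.im h
    simp [Complex.sub_im, Complex.conj_im] at this
    nlinarith
  have hdc : (starRingEnd ℂ) ζ₁ - ζ₂ ≠ 0 := by
    intro h
    have := congrArg Complex.im h
    simp [Complex.sub_im, Complex.conj_im] at this
    nlinarith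
  have hPre' : ((ζ₁ - (starRingEnd ℂ) ζ₁) * (ζ₂ - (starRingEnd ℂ) ζ₂)).re
      = -(4*ζ₁.im*ζ₂.im) := by
    simp [Complex.mul_re, Complex.sub_re, Complex.sub_im, Complex.conj_re, Complex.conj_im]
    ring
  have hnd : Complex.normSq (ζ₁ - (starRingEnd ℂ) ζ₂)
      = Complex.normSq (ζ₁ - ζ₂) + 4*ζ₁.im*ζ₂.im := by
    simp [Complex.normSq_apply, Complex.sub_re, Complex.sub_im, Complex.conj_re,
      Complex.conj_im]
    ring
  have hq : 0 < Complex.normSq (ζ₁ - ζ₂) :=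
    Complex.normSq_pos.mpr (sub_ne_zero.mpr hne)
  have hT1 : Complex.normSq s ≤ 1 := by
    have h := herm_cs' u₂ u₁ hu2 hu1
    rw [← hs] at h
    have := Complex.sq_norm s
    nlinarith [norm_nonneg s]
  have hT0 : 0 ≤ Complex.normSq s := Complex.normSq_nonneg s
  have hpos : 0 < eneg := by
    rw [hEdef, hPre', Complex.sq_norm, Complex.sq_norm, Complex.sq_norm,
      Complex.normSq_div]
    have hnd0 : 0 < Complex.normSq (ζ₁ - (starRingEnd ℂ) ζ₂) :=
      Complex.normSq_pos.mpr hd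
    have key : 0 < 1 + -(4*ζ₁.im*ζ₂.im) / Complex.normSq (ζ₁ - (starRingEnd ℂ) ζ₂)
        * Complex.normSq s := by
      rw [div_mul_eq_mul_div, neg_mul, neg_div, ← sub_eq_add_neg, sub_pos,
        div_lt_one hnd0]
      nlinarith [mul_nonneg (mul_nonneg (by linarith : (0:ℝ) ≤ 4*ζ₁.im) h2.le)
        (sub_nonneg.mpr hT1), mul_pos h1 h2]
    positivity
  have hrr : (((Real.sqrt eneg)⁻¹ : ℝ) : ℂ) * (((Real.sqrt eneg)⁻¹ : ℝ) : ℂ)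
      * ((eneg : ℝ) : ℂ) = 1 := by
    have h : ((Real.sqrt eneg)⁻¹ * (Real.sqrt eneg)⁻¹ * eneg : ℝ) = 1 := by
      rw [← mul_inv, Real.mul_self_sqrt hpos.le]
      exact inv_mul_cancel₀ hpos.ne'
    exact_mod_cast congrArg (Complex.ofReal) h
  have habs : ∀ z : ℂ, ((‖z‖ : ℝ) : ℂ)^2 = z * (starRingEnd ℂ) z := by
    intro z
    rw [Complex.mul_conj]
    exact_mod_cast congrArg (Complex.ofReal) (Complex.sq_norm z)
  have hPre : ((((ζ₁ - (starRingEnd ℂ) ζ₁) * (ζ₂ - (starRingEnd ℂ) ζ₂)).re : ℝ) : ℂ)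
      = (ζ₁ - (starRingEnd ℂ) ζ₁) * (ζ₂ - (starRingEnd ℂ) ζ₂) := by
    have hc : (starRingEnd ℂ) ((ζ₁ - (starRingEnd ℂ) ζ₁) * (ζ₂ - (starRingEnd ℂ) ζ₂))
        = (ζ₁ - (starRingEnd ℂ) ζ₁) * (ζ₂ - (starRingEnd ℂ) ζ₂) := by
      simp only [_root_.map_mul, map_sub, Complex.conj_conj]
      ring
    exact Complex.conj_eq_iff_re.mp hc
  have hst : s * (starRingEnd ℂ) s = ((Complex.normSq s : ℝ) : ℂ) := Complex.mul_conj s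
  have habs2 : ((‖s‖ : ℝ) : ℂ)^2 = ((Complex.normSq s : ℝ) : ℂ) := by
    exact_mod_cast congrArg (Complex.ofReal) (Complex.sq_norm s)
  have hEc : ((eneg : ℝ) : ℂ) * ((ζ₁ - (starRingEnd ℂ) ζ₂) * ((starRingEnd ℂ) ζ₁ - ζ₂))^2
      = (ζ₁ - ζ₂) * ((starRingEnd ℂ) ζ₁ - (starRingEnd ℂ) ζ₂) *
        ((ζ₁ - (starRingEnd ℂ) ζ₂) * ((starRingEnd ℂ) ζ₁ - ζ₂)
          + (ζ₁ - (starRingEnd ℂ) ζ₁) * (ζ₂ - (starRingEnd ℂ) ζ₂)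
            * ((Complex.normSq s : ℝ) : ℂ)) := by
    rw [hEdef]
    push_cast
    rw [habs, habs, habs2, hPre]
    simp only [map_div₀, map_sub, Complex.conj_conj]
    obtain ⟨t, ht⟩ : ∃ t : ℂ, ((Complex.normSq s : ℝ) : ℂ) = t := ⟨_, rfl⟩
    rw [ht]
    field_simp
  have hbig : (((Real.sqrt eneg)⁻¹ : ℝ) : ℂ) * (((Real.sqrt eneg)⁻¹ : ℝ) : ℂ) *
      ((ζ₁ - ζ₂) * ((starRingEnd ℂ) ζ₁ - (starRingEnd ℂ) ζ₂) *
        ((ζ₁ - (starRingEnd ℂ) ζ₂) * ((starRingEnd ℂ) ζ₁ - ζ₂)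
          + (ζ₁ - (starRingEnd ℂ) ζ₁) * (ζ₂ - (starRingEnd ℂ) ζ₂)
            * ((Complex.normSq s : ℝ) : ℂ)))
      = ((ζ₁ - (starRingEnd ℂ) ζ₂) * ((starRingEnd ℂ) ζ₁ - ζ₂))^2 := by
    rw [← hEc, show (((Real.sqrt eneg)⁻¹ : ℝ) : ℂ) * (((Real.sqrt eneg)⁻¹ : ℝ) : ℂ) *
      (((eneg : ℝ) : ℂ) * ((ζ₁ - (starRingEnd ℂ) ζ₂) * ((starRingEnd ℂ) ζ₁ - ζ₂))^2)
      = ((((Real.sqrt eneg)⁻¹ : ℝ) : ℂ) * (((Real.sqrt eneg)⁻¹ : ℝ) : ℂ) *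
        ((eneg : ℝ) : ℂ)) * ((ζ₁ - (starRingEnd ℂ) ζ₂) * ((starRingEnd ℂ) ζ₁ - ζ₂))^2
      from by ring, hrr, one_mul]
  simp only [_root_.map_mul, map_div₀, map_sub, Complex.conj_conj, Complex.conj_ofReal]
  linear_combination helper' ((((Real.sqrt eneg)⁻¹ : ℝ) : ℂ)) s ((starRingEnd ℂ) s)
    ((Complex.normSq s : ℝ) : ℂ) ζ₁ ((starRingEnd ℂ) ζ₁) ζ₂ ((starRingEnd ℂ) ζ₂)
    hd hdc hst hbig

end
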